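/- arXiv:2208.09753 — 2 statements merged into one kernel-verified Lean document; each statement's English description precedes it below -/
import Mathlib

section
/- Let n ≥ 2 and p ≥ n be integers and let I⁺(n,p) = {ξ ∈ ℕ^n : ξ_i ≥ 1, ∑ξ_i ≤ p}. Then ∑_{j=1}^{p-n+1} j · Λ_{I⁺(n,p)}(j) = (p+1)_{n+1}/((n+1)(n-1)!), where Λ_{I⁺(n,p)}(j) counts the total occurrences of j among coordinates of vectors in I⁺(n,p). Equivalently, the degree ∑_{ξ ∈ I⁺(n,p)} |ξ|_1 of the homogeneous determinant polynomial equals (p+1)_{n+1}/((n+1)(n-1)!). -/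
open Finset

lemma list_sum_map_range (f : ℕ → ℕ) (n : ℕ) :
    ((List.range n).map f).sum = ∑ i ∈ Finset.range n, f i := by
  induction n with
  | zero => simp
  | succ n ih =>
    rw [List.range_succ, List.map_append, List.sum_append, Finset.sum_range_succ, ih]; simp

lemma len_aux : ∀ (k n : ℕ), (List.Nat.antidiagonalTuple (k+1) n).length = (n+k).choose k := by
  intro k
  induction k with
  | zero => intro n; rw [List.Nat.antidiagonalTuple_one]; simp
  | succ k ih =>
    intro n
    show (List.Nat.antidiagonalTuple (k+2) n).length = _
    rw [List.Nat.antidiagonalTuple, List.length_flatMap]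
    have h0 : List.Nat.antidiagonal n = (List.range (n+1)).map fun i => (i, n - i) := rfl
    rw [h0, List.map_map, list_sum_map_range]
    simp only [Function.comp_apply, List.length_map]
    rw [Finset.sum_congr rfl fun i _ => ih (n - i)]
    have h3 : ∑ i ∈ range (n+1), (n - i + k).choose k
        = ∑ i ∈ range (n+1), (i + k).choose k := by
      rw [← Finset.sum_range_reflect (fun i => (i + k).choose k) (n+1)]
      exact Finset.sum_congr rfl fun i hi => by congr 1 <;> omega
    rw [h3]
    have h4 : ∀ N, ∑ j ∈ range (N+1), (j+k).choose k = ∑ m ∈ Icc k (N+k), m.choose k := by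
      intro N
      induction N with
      | zero => simp
      | succ N ihN =>
        rw [Finset.sum_range_succ, ihN]
        have hh : N+1+k = (N+k)+1 := by omega
        rw [hh, Finset.sum_Icc_succ_top (by omega)]
    rw [h4, Nat.sum_Icc_choose]
    congr 1 <;> omega

lemma card_adt (k n : ℕ) : (Finset.Nat.antidiagonalTuple (k+1) n).card = (n+k).choose k := by
  rw [Finset.card_def]
  exact len_aux k n

/-- The set I⁺(n,p) of vectors in ℕ^n with strictly positive coordinates and
coordinate sum at most p. -/
def Iplus (n p : ℕ) : Finset (Fin n → ℕ) :=
  ((Finset.range (p + 1)).biUnion (fun m => Finset.Nat.antidiagonalTuple n m)).filter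
    (fun ξ => ∀ i, 1 ≤ ξ i)

/-- Λ_{I⁺(n,p)}(j): total number of occurrences of j among coordinates of
vectors in I⁺(n,p). -/
def Lam (n p j : ℕ) : ℕ :=
  ∑ ξ ∈ Iplus n p, (Finset.univ.filter (fun i => ξ i = j)).card

lemma card_P (n m : ℕ) (hn : 2 ≤ n) :
    ((Finset.Nat.antidiagonalTuple n m).filter (fun ξ => ∀ i, 1 ≤ ξ i)).card
      = (m-1).choose (n-1) := by
  by_cases hm : m < n
  · rw [Finset.card_eq_zero.mpr, Nat.choose_eq_zero_of_lt (by omega)]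
    rw [Finset.filter_eq_empty_iff]
    intro ξ hξ
    rw [Finset.Nat.mem_antidiagonalTuple] at hξ
    intro hpos
    have : (n : ℕ) ≤ ∑ i, ξ i := by
      calc (n : ℕ) = ∑ _i : Fin n, 1 := by simp
      _ ≤ ∑ i, ξ i := Finset.sum_le_sum fun i _ => hpos i
    omega
  · push_neg at hm
    have key : ((Finset.Nat.antidiagonalTuple n m).filter (fun ξ => ∀ i, 1 ≤ ξ i)).card
        = (Finset.Nat.antidiagonalTuple n (m - n)).card := by
      apply Finset.card_nbij' (i := fun ξ k => ξ k - 1) (j := fun η k => η k + 1)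
      · intro ξ hξ
        rw [Finset.mem_coe, Finset.mem_filter, Finset.Nat.mem_antidiagonalTuple] at hξ
        rw [Finset.mem_coe, Finset.Nat.mem_antidiagonalTuple]
        have : (∑ k, (ξ k - 1)) + n = m := by
          have h1 : ∑ k, ((ξ k - 1) + 1) = ∑ k, ξ k :=
            Finset.sum_congr rfl fun k _ => by have := hξ.2 k; omega
          rw [Finset.sum_add_distrib] at h1
          simp at h1
          omega
        show ∑ k, (ξ k - 1) = m - n
        omega
      · intro η hη
        rw [Finset.mem_coe, Finset.Nat.mem_antidiagonalTuple] at hη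
        rw [Finset.mem_coe, Finset.mem_filter, Finset.Nat.mem_antidiagonalTuple]
        refine ⟨?_, fun i => Nat.le_add_left 1 _⟩
        rw [Finset.sum_add_distrib]
        simp [hη]
        omega
      · intro ξ hξ
        rw [Finset.mem_coe, Finset.mem_filter] at hξ
        funext k
        simp only []
        have := hξ.2 k
        omega
      · intro η hη
        funext k
        simp
    rw [key]
    clear key
    have h5 := card_adt (n-1) (m-n)
    have h6 : n - 1 + 1 = n := by omega
    rw [h6] at h5
    rw [h5]
    congr 1
    omega

lemma sum_m_choose (n : ℕ) (hn : 1 ≤ n) (p : ℕ) :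
    ∑ m ∈ Finset.range (p+1), m * (m-1).choose (n-1) = n * (p+1).choose (n+1) := by
  induction p with
  | zero => simp [Nat.choose_eq_zero_of_lt (by omega : 1 < n + 1)]
  | succ p ih =>
    rw [Finset.sum_range_succ, ih]
    have h1 : (p+2).choose (n+1) = (p+1).choose n + (p+1).choose (n+1) :=
      Nat.choose_succ_succ (p+1) n
    have h2 : (p+1) * p.choose (n-1) = (p+1).choose n * n := by
      have h := Nat.add_one_mul_choose_eq p (n-1)
      have hn' : n - 1 + 1 = n := by omega
      rw [hn'] at h
      exact h
    have h3 : p + 1 - 1 = p := by omega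
    rw [h3, h2, h1]
    ring

lemma mem_Iplus {n p : ℕ} {ξ : Fin n → ℕ} :
    ξ ∈ Iplus n p ↔ (∑ i, ξ i ≤ p ∧ ∀ i, 1 ≤ ξ i) := by
  unfold Iplus
  simp only [Finset.mem_filter, Finset.mem_biUnion, Finset.mem_range,
    Finset.Nat.mem_antidiagonalTuple]
  constructor
  · rintro ⟨⟨m, hm, hs⟩, h⟩
    exact ⟨by omega, h⟩
  · rintro ⟨hs, h⟩
    exact ⟨⟨∑ i, ξ i, by omega, rfl⟩, h⟩

lemma sum_Iplus (n p : ℕ) (hn : 2 ≤ n) :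
    ∑ ξ ∈ Iplus n p, ∑ i, ξ i = n * (p+1).choose (n+1) := by
  unfold Iplus
  rw [Finset.filter_biUnion]
  rw [Finset.sum_biUnion]
  · have : ∀ m ∈ Finset.range (p+1),
        ∑ ξ ∈ (Finset.Nat.antidiagonalTuple n m).filter (fun ξ => ∀ i, 1 ≤ ξ i), ∑ i, ξ i
        = m * (m-1).choose (n-1) := by
      intro m _
      rw [← card_P n m hn]
      rw [Finset.sum_congr rfl (fun ξ hξ => ?_), Finset.sum_const, smul_eq_mul, mul_comm]
      rw [Finset.mem_filter, Finset.Nat.mem_antidiagonalTuple] at hξ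
      exact hξ.1
    rw [Finset.sum_congr rfl this]
    exact sum_m_choose n (by omega) p
  · intro a _ b _ hab
    rw [Function.onFun, Finset.disjoint_left]
    intro ξ hξa hξb
    rw [Finset.mem_filter, Finset.Nat.mem_antidiagonalTuple] at hξa hξb
    exact hab (hξa.1.symm.trans hξb.1)

lemma pointwise_eq (n p : ℕ) (hn : 2 ≤ n) {ξ : Fin n → ℕ} (hξ : ξ ∈ Iplus n p) :
    ∑ i, ξ i = ∑ j ∈ Finset.Icc 1 (p - n + 1), j * (Finset.univ.filter (fun i => ξ i = j)).card := by
  obtain ⟨hsum, hpos⟩ := mem_Iplus.mp hξ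
  have hbound : ∀ i, ξ i ≤ p - n + 1 := by
    intro i
    have hsplit : ξ i + ∑ k ∈ Finset.univ.erase i, ξ k = ∑ k, ξ k :=
      Finset.add_sum_erase Finset.univ ξ (Finset.mem_univ i)
    have hge : (Finset.univ.erase i).card ≤ ∑ k ∈ Finset.univ.erase i, ξ k := by
      calc (Finset.univ.erase i).card = ∑ _k ∈ Finset.univ.erase i, 1 := by simp
      _ ≤ _ := Finset.sum_le_sum fun k _ => hpos k
    have hcard : (Finset.univ.erase i : Finset (Fin n)).card = n - 1 := by
      rw [Finset.card_erase_of_mem (Finset.mem_univ i)]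
      simp
    omega
  have step : ∀ j, j * (Finset.univ.filter (fun i => ξ i = j)).card
      = ∑ i ∈ Finset.univ.filter (fun i => ξ i = j), j := by
    intro j
    rw [Finset.sum_const, smul_eq_mul, mul_comm]
  rw [Finset.sum_congr rfl fun j _ => step j]
  simp only [Finset.sum_filter]
  rw [Finset.sum_comm]
  refine (Finset.sum_congr rfl fun i _ => ?_).symm
  rw [Finset.sum_ite_eq]
  rw [if_pos]
  rw [Finset.mem_Icc]
  exact ⟨hpos i, hbound i⟩

/-- The degree of the determinant polynomial: ∑_{ξ∈I⁺(n,p)} |ξ|₁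
= ∑_{j=1}^{p-n+1} j·Λ_{I⁺(n,p)}(j) = (p+1)_{n+1}/((n+1)(n-1)!). -/
theorem degree_identity (n p : ℕ) (hn : 2 ≤ n) (hp : n ≤ p) :
    (∑ ξ ∈ Iplus n p, (∑ i, ξ i) : ℚ) =
        (∑ j ∈ Finset.Icc 1 (p - n + 1), (j : ℚ) * (Lam n p j : ℚ)) ∧
    (∑ j ∈ Finset.Icc 1 (p - n + 1), (j : ℚ) * (Lam n p j : ℚ)) =
        ((p + 1).descFactorial (n + 1) : ℚ) / ((n + 1) * (n - 1).factorial) := by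
  have hnat : (∑ ξ ∈ Iplus n p, ∑ i, ξ i) = ∑ j ∈ Finset.Icc 1 (p-n+1), j * Lam n p j := by
    rw [Finset.sum_congr rfl (fun ξ hξ => pointwise_eq n p hn hξ), Finset.sum_comm]
    unfold Lam
    exact Finset.sum_congr rfl fun j _ => by rw [Finset.mul_sum]
  have hval : (∑ ξ ∈ Iplus n p, ∑ i, ξ i) = n * (p+1).choose (n+1) := sum_Iplus n p hn
  constructor
  · exact_mod_cast hnat
  · have h2 : (∑ j ∈ Finset.Icc 1 (p-n+1), (j:ℚ) * (Lam n p j : ℚ))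
        = ((n * (p+1).choose (n+1) : ℕ) : ℚ) := by
      exact_mod_cast (hnat.symm.trans hval)
    rw [h2, Nat.descFactorial_eq_factorial_mul_choose]
    clear h2 hnat hval
    have hfac : ((n+1).factorial : ℚ) = ((n:ℚ)+1) * n * (n-1).factorial := by
      obtain ⟨k, rfl⟩ : ∃ k, n = k + 2 := ⟨n-2, by omega⟩
      show (((k+3).factorial : ℕ) : ℚ) = _
      rw [Nat.factorial_succ, Nat.factorial_succ]
      push_cast
      ring_nf
    have hne1 : ((n:ℚ)+1) ≠ 0 := by positivity
    have hne2 : (((n-1).factorial : ℕ) : ℚ) ≠ 0 := by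
      exact_mod_cast (Nat.factorial_pos _).ne'
    push_cast
    rw [hfac]
    field_simp
end

section
/- Let n, p ∈ ℕ and κ = 0. The coefficient matrix K indexed by I(n,p) = {ξ ∈ ℕ₀^n : |ξ|_1 ≤ p} with entries K_{ij} = 2^{n - #\{l : η_{j,l} = 0\}} · ∏_{l=1}^n η_{j,l}^{2ξ_{i,l}} (with the convention 0^0 = 1) is nonsingular. -/
/-- The set I(n,p) of multi-indices ξ ∈ ℕ₀^n with coordinate sum at most p. -/
def Inp (n p : ℕ) : Finset (Fin n → ℕ) :=
  (Finset.range (p + 1)).biUnion (fun m => Finset.Nat.antidiagonalTuple n m)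

open MvPolynomial

lemma td_mul_X_sub_C {σ : Type*} [DecidableEq σ] (i : σ) (a : ℚ) (f : MvPolynomial σ ℚ) (hf : f ≠ 0) :
    f.totalDegree + 1 ≤ ((X i - C a) * f).totalDegree := by
  have hne : f.support.Nonempty := by
    rwa [Finset.nonempty_iff_ne_empty, ne_eq, support_eq_empty]
  obtain ⟨m, hm, hms⟩ := Finset.exists_mem_eq_sup f.support hne (fun s => s.sum fun _ e => e)
  have hsum : (Finsupp.single i 1 + m).sum (fun _ e => e) = f.totalDegree + 1 := by
    rw [Finsupp.sum_add_index (by simp) (by intros; rfl)]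
    simp [Finsupp.sum_single_index, ← hms, totalDegree]
    omega
  have hcoeff : coeff (Finsupp.single i 1 + m) ((X i - C a) * f) = coeff m f := by
    rw [sub_mul, coeff_sub, coeff_X_mul, coeff_C_mul]
    have : coeff (Finsupp.single i 1 + m) f = 0 := by
      apply coeff_eq_zero_of_totalDegree_lt
      change f.totalDegree < (Finsupp.single i 1 + m).sum fun _ e => e
      rw [hsum]
      omega
    rw [this, mul_zero, sub_zero]
  have hmem : (Finsupp.single i 1 + m) ∈ ((X i - C a) * f).support := by
    rw [mem_support_iff, hcoeff]
    exact mem_support_iff.mp hm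
  have := le_totalDegree hmem
  rw [hsum] at this
  exact this

lemma vanish (n : ℕ) : ∀ (p : ℕ) (t : Fin n → ℕ → ℚ), (∀ l, Function.Injective (t l)) →
    ∀ P : MvPolynomial (Fin n) ℚ, P.totalDegree ≤ p →
    (∀ η : Fin n → ℕ, (∑ l, η l) ≤ p → eval (fun l => t l (η l)) P = 0) → P = 0 := by
  induction n with
  | zero =>
    intro p t ht P hdeg hv
    obtain ⟨c, rfl⟩ := C_surjective (Fin 0) P
    have h0 := hv (fun l => l.elim0) (by simp)
    rw [eval_C] at h0
    rw [h0]; simp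
  | succ n ihn =>
    intro p
    induction p using Nat.strong_induction_on with
    | _ p ihp =>
    intro t ht P hdeg hv
    match p, hdeg, hv, ihp with
    | 0, hdeg, hv, ihp =>
      have hdeg0 : P.totalDegree = 0 := Nat.le_zero.mp hdeg
      have hsupp : ∀ m ∈ P.support, m = 0 := by
        intro m hm
        ext x
        exact (totalDegree_eq_zero_iff (Fin (n+1)) P).mp hdeg0 m hm x
      have hPC : P = C (coeff 0 P) := by
        ext m
        by_cases h : m = 0
        · subst h; simp
        · rw [coeff_C, if_neg (Ne.symm h)]
          by_contra hc
          exact h (hsupp m (mem_support_iff.mpr hc))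
      have h0 := hv (fun _ => 0) (by simp)
      rw [hPC] at h0 ⊢
      rw [eval_C] at h0
      rw [h0]; simp
    | (m+1), hdeg, hv, ihp =>
      set q := finSuccEquiv ℚ n P with hq
      -- Step A : restriction to first variable = t 0 0 vanishes
      have hr_eval : ∀ s : Fin n → ℚ,
          eval s (Polynomial.eval (C (t 0 0)) q) = eval (Fin.cons (t 0 0) s) P := by
        intro s
        rw [eval_eq_eval_mv_eval', Polynomial.eval_map]
        conv_rhs => rw [show (t 0 0) = eval s (C (t 0 0)) from by simp]
        rw [Polynomial.eval₂_at_apply, ← hq]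
      have hrdeg : (Polynomial.eval (C (t 0 0)) q).totalDegree ≤ m + 1 := by
        rw [Polynomial.eval_eq_sum_range]
        refine le_trans (totalDegree_finset_sum _ _) (Finset.sup_le ?_)
        intro j hj
        refine le_trans (totalDegree_mul _ _) ?_
        have h1 : ((C (t 0 0) : MvPolynomial (Fin n) ℚ) ^ j).totalDegree = 0 := by
          rw [← C_pow, totalDegree_C]
        rw [h1, add_zero]
        by_cases hc : q.coeff j = 0
        · rw [hc]; simp
        · exact le_trans (le_trans (Nat.le_add_right _ j)
            (totalDegree_coeff_finSuccEquiv_add_le P j hc)) hdeg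
      have hr0 : Polynomial.eval (C (t 0 0)) q = 0 := by
        refine ihn (m+1) (fun l => t l.succ) (fun l => ht l.succ) _ hrdeg ?_
        intro η' hη'
        rw [hr_eval]
        have hnode : (Fin.cons (t 0 0) (fun l => t l.succ (η' l)) : Fin (n+1) → ℚ)
            = fun l => t l ((Fin.cons 0 η' : Fin (n+1) → ℕ) l) := by
          funext l
          refine Fin.cases ?_ ?_ l <;> simp
        rw [hnode]
        refine hv _ ?_
        rw [Fin.sum_cons]
        omega
      -- factor
      have hdvd : (Polynomial.X - Polynomial.C (C (t 0 0))) ∣ q :=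
        Polynomial.dvd_iff_isRoot.mpr hr0
      obtain ⟨q₂, hq₂⟩ := hdvd
      set P₂ := (finSuccEquiv ℚ n).symm q₂ with hP₂def
      have hq₂' : finSuccEquiv ℚ n P₂ = q₂ := (finSuccEquiv ℚ n).apply_symm_apply q₂
      have keyfac : ∀ v : Fin (n+1) → ℚ, eval v P = (v 0 - t 0 0) * eval v P₂ := by
        intro v
        have hv' : v = Fin.cons (v 0) (Fin.tail v) := (Fin.cons_self_tail v).symm
        rw [hv', eval_eq_eval_mv_eval', eval_eq_eval_mv_eval', ← hq, hq₂, hq₂',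
          Polynomial.map_mul, Polynomial.eval_mul, Polynomial.map_sub,
          Polynomial.map_X, Polynomial.map_C, Polynomial.eval_sub,
          Polynomial.eval_X, Polynomial.eval_C, eval_C]
        simp
      have hfac : P = (X 0 - C (t 0 0)) * P₂ := by
        apply MvPolynomial.funext
        intro x
        rw [keyfac]
        simp [eval_X]
      by_cases hP₂0 : P₂ = 0
      · rw [hfac, hP₂0, mul_zero]
      · have hdeg₂ : P₂.totalDegree ≤ m := by
          have h1 := td_mul_X_sub_C 0 (t 0 0) P₂ hP₂0
          rw [← hfac] at h1
          omega
        set t' : Fin (n+1) → ℕ → ℚ :=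
          Fin.cons (fun k => t 0 (k+1)) (fun l => t l.succ) with ht'def
        have ht' : ∀ l, Function.Injective (t' l) := by
          intro l
          refine Fin.cases ?_ ?_ l
          · simp only [ht'def, Fin.cons_zero]
            intro a b hab
            have := ht 0 hab
            omega
          · intro i; simp only [ht'def, Fin.cons_succ]; exact ht i.succ
        have hv₂ : ∀ η : Fin (n+1) → ℕ, (∑ l, η l) ≤ m →
            eval (fun l => t' l (η l)) P₂ = 0 := by
          intro η hη
          set ηb : Fin (n+1) → ℕ := Fin.cons (η 0 + 1) (Fin.tail η) with hηb
          have hnode : (fun l => t' l (η l)) = fun l => t l (ηb l) := by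
            funext l
            refine Fin.cases ?_ ?_ l <;> simp [ht'def, hηb, Fin.tail]
          have hsum : (∑ l, ηb l) ≤ m + 1 := by
            rw [hηb, Fin.sum_cons]
            have : (∑ l, η l) = η 0 + ∑ l, Fin.tail η l := by
              rw [Fin.sum_univ_succ]; rfl
            omega
          have h0 := hv ηb hsum
          rw [keyfac] at h0
          have hne : (fun l => t l (ηb l)) 0 - t 0 0 ≠ 0 := by
            simp only [hηb, Fin.cons_zero]
            intro hc
            have : t 0 (η 0 + 1) = t 0 0 := by linarith [sub_eq_zero.mp hc]
            have := ht 0 this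
            omega
          rw [hnode]
          exact (mul_eq_zero.mp h0).resolve_left hne
        have := ihp m (Nat.lt_succ_self m) t' ht' P₂ hdeg₂ hv₂
        rw [hfac, this, mul_zero]

/-- The coefficient matrix K for κ = 0, with entries
K_{ξη} = 2^{n - #{l : η_l = 0}} · ∏_l η_l^{2ξ_l} (0^0 = 1), is nonsingular. -/
theorem K_nonsingular (n p : ℕ) (hn : 1 ≤ n) (hp : 1 ≤ p) :
    Matrix.det (fun ξ η : ↥(Inp n p) =>
      (2 : ℚ) ^ (n - (Finset.univ.filter (fun l => (η : Fin n → ℕ) l = 0)).card) *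
        ∏ l, ((η : Fin n → ℕ) l : ℚ) ^ (2 * (ξ : Fin n → ℕ) l)) ≠ 0 := by
  classical
  intro hdet
  obtain ⟨v, hv0, hvM⟩ := Matrix.exists_vecMul_eq_zero_iff.mpr hdet
  have mem_Inp : ∀ {η : Fin n → ℕ}, η ∈ Inp n p ↔ (∑ l, η l) ≤ p := by
    intro η
    simp only [Inp, Finset.mem_biUnion, Finset.mem_range, Finset.Nat.mem_antidiagonalTuple]
    constructor
    · rintro ⟨m, hm, rfl⟩; omega
    · intro h; exact ⟨_, Nat.lt_succ_of_le h, rfl⟩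
  set P : MvPolynomial (Fin n) ℚ :=
    ∑ ξ ∈ (Inp n p).attach, monomial (Finsupp.equivFunOnFinite.symm ξ.val) (v ξ) with hP
  have hdegP : P.totalDegree ≤ p := by
    refine totalDegree_finsetSum_le ?_
    intro ξ _
    refine le_trans (totalDegree_monomial_le _ _) ?_
    rw [Finsupp.sum_fintype _ _ (fun _ => rfl)]
    simpa using mem_Inp.mp ξ.2
  have hvanish : ∀ η : Fin n → ℕ, (∑ l, η l) ≤ p →
      eval (fun l => ((η l : ℚ))^2) P = 0 := by
    intro η hη
    have hmem : η ∈ Inp n p := mem_Inp.mpr hη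
    have hcol := congrFun hvM ⟨η, hmem⟩
    simp only [Matrix.vecMul, dotProduct, Pi.zero_apply] at hcol
    have hfac : ∑ ξ : ↥(Inp n p), v ξ * ∏ l, ((η l : ℚ)) ^ (2 * (ξ : Fin n → ℕ) l) = 0 := by
      have h2 : (2:ℚ) ^ (n - (Finset.univ.filter (fun l => η l = 0)).card) ≠ 0 :=
        pow_ne_zero _ two_ne_zero
      have : (2:ℚ) ^ (n - (Finset.univ.filter (fun l => η l = 0)).card) *
          ∑ ξ : ↥(Inp n p), v ξ * ∏ l, ((η l : ℚ)) ^ (2 * (ξ : Fin n → ℕ) l) = 0 := by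
        rw [Finset.mul_sum, ← hcol]
        congr 1
        funext ξ
        ring
      exact (mul_eq_zero.mp this).resolve_left h2
    rw [hP, map_sum]
    rw [Finset.univ_eq_attach] at hfac
    rw [← hfac]
    refine Finset.sum_congr rfl ?_
    intro ξ _
    rw [eval_monomial]
    congr 1
    rw [Finsupp.prod_pow]
    refine Finset.prod_congr rfl ?_
    intro l _
    rw [Finsupp.coe_equivFunOnFinite_symm, pow_mul]
  have hP0 : P = 0 := by
    refine vanish n p (fun _ k => ((k : ℚ))^2) ?_ P hdegP hvanish
    intro l a b hab
    have : (a:ℚ)^2 = (b:ℚ)^2 := hab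
    have h2 : a^2 = b^2 := by exact_mod_cast this
    exact Nat.pow_left_injective (by norm_num) h2
  obtain ⟨ξ0, hξ0⟩ : ∃ ξ0, v ξ0 ≠ 0 := Function.ne_iff.mp hv0
  have hcoeff : coeff (Finsupp.equivFunOnFinite.symm ξ0.val) P = v ξ0 := by
    rw [hP, coeff_sum]
    rw [Finset.sum_eq_single ξ0]
    · rw [coeff_monomial, if_pos rfl]
    · intro ξ _ hne
      rw [coeff_monomial, if_neg]
      intro hc
      exact hne (Subtype.ext (Finsupp.equivFunOnFinite.symm.injective hc))
    · intro h; exact absurd (Finset.mem_attach _ ξ0) h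
  rw [hP0] at hcoeff
  simp at hcoeff
  exact hξ0 hcoeff.symm
end
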